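/- For every Farey word s = s_1…s_m of length m ≥ 2, the word s^- obtained by changing the last digit of s from 1 to 0 is a palindrome: s_1…s_{m-1}0 read backwards equals itself. -/

import Mathlib

/-- The cyclic rotation of a binary word `c` by `i`: `c_{i+1}…c_m c_1…c_i`. -/
def rot (c : List Bool) (i : ℕ) : List Bool := c.drop i ++ c.take i

/-- The lexicographically largest cyclic rotation `L(s)` of `s`. -/
def maxRot (s : List Bool) : List Bool :=
  (List.range s.length).foldl (fun acc i => max acc (rot s i)) s

/-- The lexicographically smallest cyclic rotation `S(s)` of `s`. -/
def minRot (s : List Bool) : List Bool :=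
  (List.range s.length).foldl (fun acc i => min acc (rot s i)) s

/-- A binary word is Lyndon if every proper suffix is strictly lexicographically
greater than the prefix of the same length. -/
def IsLyndon (s : List Bool) : Prop :=
  ∀ i, 0 < i → i < s.length → s.take (s.length - i) < s.drop i

/-- One step of the Farey-word construction: insert `w v` between neighbors `w, v`. -/
def fareyStep : List (List Bool) → List (List Bool)
  | [] => []
  | [w] => [w]
  | w :: v :: rest => w :: (w ++ v) :: fareyStep (v :: rest)

/-- The ordered sets `F_n` of Farey words, with `F_0 = (0, 1)`. -/
def farey : ℕ → List (List Bool)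
  | 0 => [[false], [true]]
  | n + 1 => fareyStep (farey n)

/-- A Farey word is an element of some `F_n`. -/
def IsFarey (w : List Bool) : Prop := ∃ n, w ∈ farey n

/-- A non-degenerate Farey word: a Farey word other than the single letters `0` and `1`,
equivalently of length at least two. -/
def IsFareyND (w : List Bool) : Prop := IsFarey w ∧ 2 ≤ w.length

/-- For every non-degenerate Farey word `s`, the word `s⁻` (last digit changed from
`1` to `0`) is a palindrome. -/


def pal (l : List Bool) : Prop := l.reverse = l

inductive FPair : List Bool → List Bool → Prop
  | base : FPair [false] [true]
  | left {u v : List Bool} : FPair u v → FPair u (u ++ v)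
  | right {u v : List Bool} : FPair u v → FPair (u ++ v) v

lemma dlq (q : List Bool) : (false :: q ++ [true]).dropLast = false :: q := by
  rw [show false :: q ++ [true] = (false :: q) ++ [true] from rfl, List.dropLast_concat]

lemma k0 {q : List Bool} (hq : pal q) (h : pal (false :: q)) : q ++ [false] = false :: q := by
  unfold pal at hq h; simpa [hq] using h

lemma k1 {p : List Bool} (hp : pal p) (h : pal (p ++ [true])) : true :: p = p ++ [true] := by
  unfold pal at hp h; simpa [hp, List.reverse_append] using h

lemma kmain {p q : List Bool} (hp : pal p) (hq : pal q)
    (h : pal (p ++ [true] ++ false :: q)) :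
    q ++ false :: true :: p = p ++ true :: false :: q := by
  unfold pal at hp hq h
  simpa [hp, hq, List.reverse_append, List.append_assoc] using h

lemma e_left_main {p q : List Bool} (k : q ++ false :: true :: p = p ++ true :: false :: q) :
    q ++ false :: true :: (p ++ false :: true :: p) = p ++ true :: false :: (p ++ true :: false :: q) := by
  calc q ++ false :: true :: (p ++ false :: true :: p)
      = (q ++ false :: true :: p) ++ false :: true :: p := by simp [List.append_assoc]
    _ = (p ++ true :: false :: q) ++ false :: true :: p := by rw [k]
    _ = p ++ true :: false :: (q ++ false :: true :: p) := by simp [List.append_assoc]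
    _ = p ++ true :: false :: (p ++ true :: false :: q) := by rw [k]

lemma e_right_main {p q : List Bool} (k : q ++ false :: true :: p = p ++ true :: false :: q) :
    q ++ false :: true :: (q ++ false :: true :: p) = p ++ true :: false :: (q ++ true :: false :: q) := by
  calc q ++ false :: true :: (q ++ false :: true :: p)
      = q ++ false :: true :: (p ++ true :: false :: q) := by rw [k]
    _ = (q ++ false :: true :: p) ++ true :: false :: q := by simp [List.append_assoc]
    _ = (p ++ true :: false :: q) ++ true :: false :: q := by rw [k]
    _ = p ++ true :: false :: (q ++ true :: false :: q) := by simp [List.append_assoc]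

theorem fpair_spec {u v : List Bool} (h : FPair u v) :
    pal (u.tail ++ v.dropLast) ∧
    (u = [false] ∨ ∃ p, pal p ∧ u = false :: p ++ [true]) ∧
    (v = [true] ∨ ∃ q, pal q ∧ v = false :: q ++ [true]) := by
  induction h with
  | base => simp [pal]
  | @left u v h ih =>
      obtain ⟨hinv, hu, hv⟩ := ih
      have hv1 : v ≠ [] := by rcases hv with rfl | ⟨q, _, rfl⟩ <;> simp
      have hu' : u = false :: u.tail := by rcases hu with rfl | ⟨p, _, rfl⟩ <;> simp
      have hv' : v = v.dropLast ++ [true] := by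
        rcases hv with rfl | ⟨q, _, rfl⟩
        · simp
        · rw [dlq]
      have hcat : u ++ v = false :: (u.tail ++ v.dropLast) ++ [true] := by
        conv_lhs => rw [hu', hv']
        simp
      refine ⟨?_, hu, Or.inr ⟨u.tail ++ v.dropLast, hinv, hcat⟩⟩
      rw [List.dropLast_append_of_ne_nil hv1]
      rcases hu with rfl | ⟨p, hp, rfl⟩ <;> rcases hv with rfl | ⟨q, hq, rfl⟩ <;>
        simp only [dlq, List.tail_cons, List.dropLast_singleton,
          List.nil_append, List.append_nil] at hinv ⊢
      · simp [pal]
      · have k := k0 hq hinv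
        unfold pal at hq ⊢
        simp [List.reverse_append, hq, List.append_assoc]
        calc q ++ [false, false] = (q ++ [false]) ++ [false] := by simp
          _ = (false :: q) ++ [false] := by rw [k]
          _ = false :: (q ++ [false]) := by simp
          _ = false :: false :: q := by rw [k]
      · have k := k1 hp hinv
        unfold pal at hp ⊢
        simp [List.reverse_append, hp, List.append_assoc]
        calc true :: (p ++ false :: true :: p)
            = (true :: p) ++ false :: (true :: p) := by simp
          _ = (p ++ [true]) ++ false :: (p ++ [true]) := by rw [k]
          _ = p ++ true :: false :: (p ++ [true]) := by simp
      · have k := kmain hp hq hinv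
        unfold pal at hp hq ⊢
        simp [List.reverse_append, hp, hq, List.append_assoc]
        exact e_left_main k
  | @right u v h ih =>
      obtain ⟨hinv, hu, hv⟩ := ih
      have hu1 : u ≠ [] := by rcases hu with rfl | ⟨p, _, rfl⟩ <;> simp
      have hu' : u = false :: u.tail := by rcases hu with rfl | ⟨p, _, rfl⟩ <;> simp
      have hv' : v = v.dropLast ++ [true] := by
        rcases hv with rfl | ⟨q, _, rfl⟩
        · simp
        · rw [dlq]
      have hcat : u ++ v = false :: (u.tail ++ v.dropLast) ++ [true] := by
        conv_lhs => rw [hu', hv']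
        simp
      refine ⟨?_, Or.inr ⟨u.tail ++ v.dropLast, hinv, hcat⟩, hv⟩
      have htail : (u ++ v).tail = u.tail ++ v := by
        conv_lhs => rw [hu']
        simp
      rw [htail]
      rcases hu with rfl | ⟨p, hp, rfl⟩ <;> rcases hv with rfl | ⟨q, hq, rfl⟩ <;>
        simp only [dlq, List.tail_cons, List.dropLast_singleton,
          List.nil_append, List.append_nil] at hinv ⊢
      · simp [pal]
      · have k := k0 hq hinv
        unfold pal at hq ⊢
        simp [List.reverse_append, hq, List.append_assoc]
        calc q ++ false :: true :: (q ++ [false])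
            = q ++ false :: true :: (false :: q) := by rw [k]
          _ = (q ++ [false]) ++ true :: false :: q := by simp
          _ = (false :: q) ++ true :: false :: q := by rw [k]
          _ = false :: (q ++ true :: false :: q) := by simp
      · have k := k1 hp hinv
        unfold pal at hp ⊢
        simp [List.reverse_append, hp, List.append_assoc]
        calc true :: true :: p = true :: (p ++ [true]) := by rw [k]
          _ = (true :: p) ++ [true] := by simp
          _ = (p ++ [true]) ++ [true] := by rw [k]
          _ = p ++ [true, true] := by simp
      · have k := kmain hp hq hinv
        unfold pal at hp hq ⊢
        simp [List.reverse_append, hp, hq, List.append_assoc]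
        exact e_right_main k

theorem fareyStep_spec : ∀ (l : List (List Bool)), List.Chain' FPair l →
    List.Chain' FPair (fareyStep l) ∧ (fareyStep l).head? = l.head? ∧
    ∀ w ∈ fareyStep l, w ∈ l ∨ ∃ u v, FPair u v ∧ w = u ++ v
  | [] , _ => by simp [fareyStep, List.Chain']
  | [w], _ => by simp [fareyStep, List.Chain']
  | w :: v :: rest, h => by
      obtain ⟨hwv, h2⟩ := List.isChain_cons_cons.mp h
      obtain ⟨hc, hd, hmem⟩ := fareyStep_spec (v :: rest) h2
      refine ⟨?_, by simp [fareyStep], ?_⟩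
      · show List.Chain' FPair (w :: (w ++ v) :: fareyStep (v :: rest))
        refine List.isChain_cons.mpr ⟨?_, ?_⟩
        · intro y hy; simp at hy; subst hy; exact FPair.left hwv
        · refine List.isChain_cons.mpr ⟨?_, hc⟩
          intro y hy
          rw [hd] at hy; simp at hy; subst hy; exact FPair.right hwv
      · intro x hx
        have hx' : x = w ∨ x = w ++ v ∨ x ∈ fareyStep (v :: rest) := by
          simpa [fareyStep] using hx
        rcases hx' with h1 | h1 | h1
        · exact Or.inl (by simp [h1])
        · exact Or.inr ⟨w, v, hwv, h1⟩
        · rcases hmem x h1 with h2 | h2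
          · exact Or.inl (List.mem_cons_of_mem _ h2)
          · exact Or.inr h2

theorem farey_spec (n : ℕ) : List.Chain' FPair (farey n) ∧
    ∀ w ∈ farey n, w = [false] ∨ w = [true] ∨ ∃ u v, FPair u v ∧ w = u ++ v := by
  induction n with
  | zero =>
      constructor
      · simp [farey, List.Chain']; exact FPair.base
      · intro w hw; simp [farey] at hw; tauto
  | succ n ih =>
      obtain ⟨hc, hmem⟩ := ih
      obtain ⟨hc', _, hmem'⟩ := fareyStep_spec (farey n) hc
      refine ⟨hc', ?_⟩
      intro w hw
      rcases hmem' w hw with h1 | h1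
      · exact hmem w h1
      · exact Or.inr (Or.inr h1)

theorem stmt12 (s : List Bool) (h : IsFareyND s) :
    (s.dropLast ++ [false]).reverse = s.dropLast ++ [false] := by
  obtain ⟨⟨n, hmem⟩, hlen⟩ := h
  rcases (farey_spec n).2 s hmem with h1 | h1 | ⟨u, v, hp, rfl⟩
  · subst h1; simp at hlen
  · subst h1; simp at hlen
  · obtain ⟨hinv, hu, hv⟩ := fpair_spec hp
    have hu' : u = false :: u.tail := by
      rcases hu with rfl | ⟨p, _, rfl⟩ <;> simp
    have hv' : v = v.dropLast ++ [true] := by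
      rcases hv with rfl | ⟨q, _, rfl⟩
      · simp
      · rw [dlq]
    have hs : u ++ v = false :: (u.tail ++ v.dropLast) ++ [true] := by
      conv_lhs => rw [hu', hv']
      simp
    rw [hs]
    have hdl : (false :: (u.tail ++ v.dropLast) ++ [true]).dropLast
        = false :: (u.tail ++ v.dropLast) := List.dropLast_concat ..
    rw [hdl]
    have hm := hinv
    simp only [pal] at hm
    simp only [List.reverse_append, List.reverse_cons, List.reverse_nil,
      List.nil_append, List.cons_append, List.append_assoc]
    rw [← List.append_assoc, ← List.reverse_append, hm, List.append_assoc]
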